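/- Let q be odd, m ≥ 2, n = 2m, and let η ∈ F_{q^{2m}} be such that the norm N_{q^{2m}/q}(η) is a non-square in F_q. Then every nonzero element of the set S = { a_0 x + Σ_{j=1}^{m-2} a_j x^{q^{sj}} + η b x^{q^{s(m-1)}} + a x^{q^{sm}} + η^{q^{s(m+1)}} b^{q^s} x^{q^{s(m+1)}} + Σ_{j=1}^{m-2} (a_j x)^{q^{s(2m-j)}} : a_0,...,a_{m-2} ∈ F_{q^{2m}}, a, b ∈ F_{q^m} } has rank at least 2 as an F_q-endomorphism of F_{q^{2m}}; i.e., no nonzero element of S has rank 1. -/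

import Mathlib

open Finset Polynomial

set_option linter.unusedSectionVars false

section Aux
variable {K F : Type} [Field K] [Fintype K] [Field F] [Fintype F] [Algebra K F]

/-- Fixed points of the `q`-power map lie in the image of `K`. -/
lemma aux_fixed {q : ℕ} (hK : Fintype.card K = q) (x : F) (hx : x ^ q = x) :
    ∃ k : K, algebraMap K F k = x := by
  classical
  have hq2 : 1 < q := hK ▸ Fintype.one_lt_card
  set f : F[X] := X ^ q - X with hf
  have hfdeg : f.natDegree = q := by
    rw [hf]
    rw [natDegree_sub_eq_left_of_natDegree_lt (by simpa using hq2)]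
    simp
  have hfne : f ≠ 0 := fun h => by simp [h] at hfdeg; omega
  set S : Finset F := Finset.univ.image (algebraMap K F) with hS
  have hcardS : S.card = q := by
    rw [hS, Finset.card_image_of_injective _ (algebraMap K F).injective,
      Finset.card_univ, hK]
  have hsub : S ⊆ f.roots.toFinset := by
    intro y hy
    rw [hS, Finset.mem_image] at hy
    obtain ⟨k, -, rfl⟩ := hy
    rw [Multiset.mem_toFinset, mem_roots hfne]
    have : (k : K) ^ q = k := hK ▸ FiniteField.pow_card k
    simp [hf, ← map_pow, this]
  have hcardle : f.roots.toFinset.card ≤ q := by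
    calc f.roots.toFinset.card ≤ Multiset.card f.roots := Multiset.toFinset_card_le _
    _ ≤ f.natDegree := f.card_roots'
    _ = q := hfdeg
  have hEq : S = f.roots.toFinset :=
    Finset.eq_of_subset_of_card_le hsub (by omega)
  have hx' : x ∈ f.roots.toFinset := by
    rw [Multiset.mem_toFinset, mem_roots hfne]
    simp [hf, hx]
  rw [← hEq, hS, Finset.mem_image] at hx'
  obtain ⟨k, -, hk⟩ := hx'
  exact ⟨k, hk⟩

/-- reduce exponents mod n -/
lemma aux_pow_reduce {q n : ℕ} (hF : Fintype.card F = q ^ n)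
    (x : F) (e : ℕ) : x ^ q ^ e = x ^ q ^ (e % n) := by
  have hQ : ∀ y : F, y ^ q ^ n = y := fun y => hF ▸ FiniteField.pow_card y
  have hn : 0 < n := by
    rcases Nat.eq_zero_or_pos n with rfl | h'
    · rw [pow_zero] at hF
      have := Fintype.one_lt_card (α := F)
      omega
    · exact h'
  induction e using Nat.strong_induction_on with
  | _ e ih =>
    rcases lt_or_ge e n with h | h
    · rw [Nat.mod_eq_of_lt h]
    · have h1 : e = (e - n) + n := by omega
      have h2 : x ^ q ^ e = x ^ q ^ (e - n) := by
        conv_lhs => rw [h1]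
        rw [pow_add, pow_mul, hQ]
      rw [h2, ih (e - n) (by omega), Nat.mod_eq_sub_mod h]

lemma aux_pow_maps_distinct {q n : ℕ} (hF : Fintype.card F = q ^ n) (hq : 1 < q)
    {i j : ℕ} (hi : i < n) (hj : j < n) (hij : i < j)
    (h : ∀ x : F, x ^ q ^ i = x ^ q ^ j) : False := by
  set f : F[X] := X ^ q ^ j - X ^ q ^ i with hf
  have hiltj : q ^ i < q ^ j := Nat.pow_lt_pow_right hq hij
  have hzero : f = 0 := by
    apply Polynomial.eq_zero_of_natDegree_lt_card_of_eval_eq_zero f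
      (f := fun y : F => y) Function.injective_id
    · intro y; simp [hf, (h y).symm]
    · have : f.natDegree = q ^ j := by
        rw [hf, natDegree_sub_eq_left_of_natDegree_lt (by simpa using hiltj)]
        simp
      rw [this, hF]
      exact Nat.pow_lt_pow_right hq hj
  have : f.coeff (q ^ j) = 1 := by
    rw [hf]
    simp [coeff_X_pow, Nat.ne_of_gt hiltj]
  rw [hzero] at this
  simp at this

lemma aux_dedekind {q n : ℕ} (hF : Fintype.card F = q ^ n) (hq : 1 < q)
    (T : Finset ℕ) (e : ℕ → ℕ) (he : ∀ j ∈ T, e j < n)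
    (hinj : Set.InjOn e T) (A B : ℕ → F)
    (h : ∀ x : F, ∑ j ∈ T, A j * x ^ q ^ e j = ∑ j ∈ T, B j * x ^ q ^ e j) :
    ∀ j ∈ T, A j = B j := by
  classical
  have li0 := linearIndependent_monoidHom F F
  set ψ : {j // j ∈ T} → (F →* F) := fun j => powMonoidHom (q ^ e j.1) with hψ
  have hψinj : Function.Injective ψ := by
    intro j j' hjj'
    have hfun : ∀ x : F, x ^ q ^ e j.1 = x ^ q ^ e j'.1 := by
      intro x
      have := DFunLike.congr_fun hjj' x
      simpa [hψ, powMonoidHom_apply] using this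
    have : e j.1 = e j'.1 := by
      by_contra hne
      rcases Nat.lt_or_ge (e j.1) (e j'.1) with hlt | hge
      · exact aux_pow_maps_distinct hF hq (he _ j.2) (he _ j'.2) hlt hfun
      · have hlt : e j'.1 < e j.1 := by omega
        exact aux_pow_maps_distinct hF hq (he _ j'.2) (he _ j.2) hlt
          (fun x => (hfun x).symm)
    exact Subtype.ext (hinj j.2 j'.2 this)
  have li : LinearIndependent F fun j : {j // j ∈ T} => (⇑(ψ j) : F → F) :=
    li0.comp ψ hψinj
  intro j hj
  have key := Fintype.linearIndependent_iff.mp li (fun j => A j.1 - B j.1) ?_ ⟨j, hj⟩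
  · exact sub_eq_zero.mp key
  · funext x
    show (∑ j : {j // j ∈ T}, (A j.1 - B j.1) • (⇑(ψ j) : F → F)) x = 0
    rw [Finset.sum_apply]
    simp only [Pi.smul_apply, smul_eq_mul, hψ, powMonoidHom_apply]
    rw [Finset.univ_eq_attach,
      Finset.sum_attach T (fun j => (A j - B j) * x ^ q ^ e j)]
    simp only [sub_mul]
    rw [Finset.sum_sub_distrib, h x, sub_self]

lemma aux_frob {q : ℕ} (hq : IsPrimePow q) (hK : Fintype.card K = q) :
    ∃ τ : F ≃ₐ[K] F, ∀ x : F, τ x = x ^ q := by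
  obtain ⟨p, e, pp, he, rfl⟩ := hq
  haveI : Fact p.Prime := ⟨pp.nat_prime⟩
  have hcharK : CharP K p := by
    obtain ⟨r, -, nn, hr, hcard⟩ := FiniteField.card' K
    have : p = r := by
      have heq : p ^ e = r ^ (nn : ℕ) := hK.symm.trans hcard
      have hdvd : p ∣ r ^ (nn : ℕ) := heq ▸ dvd_pow_self p (by omega)
      exact (Nat.prime_dvd_prime_iff_eq pp.nat_prime hr).mp
        (Nat.Prime.dvd_of_dvd_pow pp.nat_prime hdvd)
    have : r = ringChar K := by
      haveI := ringChar.charP K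
      obtain ⟨n2, hn2⟩ := FiniteField.card K (ringChar K)
      have : r ^ (nn : ℕ) = ringChar K ^ (n2 : ℕ) := by rw [← hcard, hn2.2]
      have hdvd : r ∣ ringChar K ^ (n2 : ℕ) := by
        rw [← this]; exact dvd_pow_self r nn.ne_zero
      exact (Nat.prime_dvd_prime_iff_eq hr hn2.1).mp (hr.dvd_of_dvd_pow hdvd)
    rw [‹p = r›, this]
    exact ringChar.charP K
  haveI : CharP F p := charP_of_injective_algebraMap (algebraMap K F).injective p
  let g : F →ₐ[K] F :=
    { toRingHom := iterateFrobenius F p e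
      commutes' := fun k => by
        show (algebraMap K F k) ^ p ^ e = algebraMap K F k
        rw [← map_pow]
        congr 1
        exact hK ▸ FiniteField.pow_card k }
  have hbij : Function.Bijective g :=
    (Finite.injective_iff_bijective).mp (g.toRingHom.injective)
  refine ⟨AlgEquiv.ofBijective g hbij, fun x => ?_⟩
  show iterateFrobenius F p e x = x ^ p ^ e
  rw [iterateFrobenius_def]

lemma aux_norm_trace {q n : ℕ} (hq : IsPrimePow q) (hK : Fintype.card K = q)
    (hF : Fintype.card F = q ^ n) (hn : 0 < n) :
    (∀ x : F, algebraMap K F (Algebra.norm K x) = x ^ (∑ i ∈ range n, q ^ i)) ∧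
    (∀ x : F, algebraMap K F (Algebra.trace K F x) = ∑ i ∈ range n, x ^ q ^ i) := by
  have hq1 : 1 < q := hq.one_lt
  have hfr : Module.finrank K F = n := by
    have h1 : Fintype.card F = q ^ Module.finrank K F := by
      rw [Module.card_eq_pow_finrank (K := K) (V := F), hK]
    exact Nat.pow_right_injective hq1 (h1.symm.trans hF)
  obtain ⟨τ, hτ⟩ := aux_frob (K := K) (F := F) hq hK
  have hτpow : ∀ (i : ℕ) (x : F), (τ ^ i) x = x ^ q ^ i := by
    intro i
    induction i with
    | zero => intro x; simp
    | succ i ih =>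
      intro x
      rw [pow_succ', AlgEquiv.mul_apply, ih, hτ, ← pow_mul, ← pow_succ]
  have hcard : Fintype.card (F ≃ₐ[K] F) = n := by
    rw [← Nat.card_eq_fintype_card, IsGalois.card_aut_eq_finrank, hfr]
  have horder : ∀ j, 0 < j → j < n → τ ^ j ≠ 1 := by
    intro j hj0 hjn h1
    have hall : ∀ x : F, x ^ q ^ j = x := by
      intro x
      have := DFunLike.congr_fun h1 x
      rwa [hτpow, AlgEquiv.one_apply] at this
    set f : F[X] := X ^ q ^ j - X with hf
    have hqj : 1 < q ^ j := Nat.one_lt_pow (by omega) hq1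
    have hzero : f = 0 := by
      apply Polynomial.eq_zero_of_natDegree_lt_card_of_eval_eq_zero f
        (f := fun y : F => y) Function.injective_id
      · intro y; simp [hf, hall y]
      · have hdeg : f.natDegree = q ^ j := by
          rw [hf, natDegree_sub_eq_left_of_natDegree_lt (by simpa using hqj)]
          simp
        rw [hdeg, hF]
        exact Nat.pow_lt_pow_right hq1 hjn
    have : f.coeff (q ^ j) = 1 := by
      rw [hf]; simp [coeff_X_pow, coeff_X, Nat.ne_of_gt hqj, (Nat.ne_of_gt hqj).symm]
    rw [hzero] at this
    simp at this
  have horderOf : orderOf τ = n := by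
    have hdvd : orderOf τ ∣ n := hcard ▸ orderOf_dvd_card
    have hpos : 0 < orderOf τ := orderOf_pos τ
    rcases lt_or_eq_of_le (Nat.le_of_dvd hn hdvd) with h | h
    · exact absurd (pow_orderOf_eq_one τ) (horder _ hpos h)
    · exact h
  have hbij : Function.Bijective (fun i : Fin n => (τ ^ (i : ℕ))) := by
    rw [Fintype.bijective_iff_injective_and_card]
    refine ⟨fun i j hij => ?_, by simp [hcard]⟩
    have := pow_eq_pow_iff_modEq.mp hij
    rw [horderOf] at this
    exact Fin.ext ((Nat.mod_eq_of_lt i.2) ▸ (Nat.mod_eq_of_lt j.2) ▸ this)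
  constructor
  · intro x
    rw [Algebra.norm_eq_prod_automorphisms]
    rw [← Fintype.prod_bijective _ hbij (fun i => (τ ^ (i : ℕ)) x) (fun σ => σ x)
      (fun i => rfl)]
    simp_rw [hτpow]
    rw [Fin.prod_univ_eq_prod_range (fun i => x ^ q ^ i) n, prod_pow_eq_pow_sum]
  · intro x
    rw [trace_eq_sum_automorphisms]
    rw [← Fintype.sum_bijective _ hbij (fun i => (τ ^ (i : ℕ)) x) (fun σ => σ x)
      (fun i => rfl)]
    simp_rw [hτpow]
    exact Fin.sum_univ_eq_sum_range (fun i => x ^ q ^ i) n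

-- arithmetic helper: q * ∑_{i<n} q^i = (∑_{i<n} q^i) + (q^n - 1)
lemma aux_arith {q n : ℕ} (hq : 1 < q) (hn : 0 < n) :
    q * (∑ i ∈ range n, q ^ i) = (∑ i ∈ range n, q ^ i) + (q ^ n - 1) := by
  have h1 : (∑ i ∈ range (n + 1), q ^ i) = (∑ i ∈ range n, q ^ i) + q ^ n :=
    Finset.sum_range_succ _ n
  have h2 : (∑ i ∈ range (n + 1), q ^ i) = (∑ i ∈ range n, q ^ (i + 1)) + q ^ 0 :=
    Finset.sum_range_succ' _ n
  have h0 : q ^ 0 = 1 := pow_zero q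
  have h3 : (∑ i ∈ range n, q ^ (i + 1)) = q * ∑ i ∈ range n, q ^ i := by
    rw [Finset.mul_sum]
    exact Finset.sum_congr rfl fun i _ => by ring
  have h4 : 1 ≤ q ^ n := Nat.one_le_pow _ _ (by omega)
  omega

lemma aux_pow_E_fixed {q n : ℕ} (hF : Fintype.card F = q ^ n) (hq : 1 < q)
    (hn : 0 < n) (x : F) : (x ^ (∑ i ∈ range n, q ^ i)) ^ q = x ^ (∑ i ∈ range n, q ^ i) := by
  set E := ∑ i ∈ range n, q ^ i with hE
  have hEpos : 0 < E := by
    have : (1:ℕ) ≤ q ^ 0 := by norm_num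
    calc 0 < q ^ 0 := by positivity
    _ ≤ E := Finset.single_le_sum (f := fun i => q ^ i) (fun i _ => Nat.zero_le _)
        (Finset.mem_range.mpr hn)
  rcases eq_or_ne x 0 with rfl | hx
  · rw [zero_pow (by omega), zero_pow (by omega)]
  · rw [← pow_mul, mul_comm, aux_arith hq hn, pow_add]
    have : x ^ (q ^ n - 1) = 1 := by
      rw [← hF]
      exact FiniteField.pow_card_sub_one_eq_one x hx
    rw [this, mul_one]

lemma aux_pow_E_fixed' {q n : ℕ} (hF : Fintype.card F = q ^ n) (hq : 1 < q)
    (hn : 0 < n) (x : F) (i : ℕ) :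
    (x ^ (∑ i ∈ range n, q ^ i)) ^ q ^ i = x ^ (∑ i ∈ range n, q ^ i) := by
  induction i with
  | zero => simp
  | succ i ih => rw [pow_succ, pow_mul, ih, aux_pow_E_fixed hF hq hn]

/-- norm is invariant under q-power -/
lemma aux_norm_pow {q n : ℕ} (hq : IsPrimePow q) (hK : Fintype.card K = q)
    (hF : Fintype.card F = q ^ n) (hn : 0 < n) (x : F) (i : ℕ) :
    Algebra.norm K (x ^ q ^ i) = Algebra.norm K x := by
  have hnf := (aux_norm_trace hq hK hF hn).1
  apply (algebraMap K F).injective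
  rw [hnf, hnf, ← pow_mul, mul_comm, pow_mul]
  exact aux_pow_E_fixed' hF hq.one_lt hn x i

/-- norms of elements of the subfield F_{q^m} inside F_{q^{2m}} are squares -/
lemma aux_norm_square {q m : ℕ} (hq : IsPrimePow q) (hqodd : Odd q)
    (hK : Fintype.card K = q) (hF : Fintype.card F = q ^ (2 * m)) (hm : 0 < m)
    (c : F) (hc : c ^ q ^ m = c) (hc0 : c ≠ 0) :
    IsSquare (Algebra.norm K c) := by
  have hq1 : 1 < q := hq.one_lt
  have hnf := (aux_norm_trace hq hK hF (by omega)).1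
  set S := ∑ i ∈ range m, q ^ i with hS
  have hsplit : (∑ i ∈ range (2 * m), q ^ i) = S * (1 + q ^ m) := by
    have : 2 * m = m + m := by omega
    rw [this, Finset.sum_range_add]
    have : (∑ i ∈ range m, q ^ (m + i)) = q ^ m * S := by
      rw [hS, Finset.mul_sum]
      exact Finset.sum_congr rfl fun i _ => by rw [pow_add]
    rw [this, hS]
    ring
  -- t = c ^ S is fixed by q-power
  have hcpow : c ^ (q ^ m - 1) = 1 := by
    have h1 : c ^ (q ^ m) = c ^ (q ^ m - 1) * c := by
      rw [← pow_succ]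
      congr 1
      have : 1 ≤ q ^ m := Nat.one_le_pow _ _ (by omega)
      omega
    have := hc
    rw [h1] at this
    field_simp at this
    exact this
  have ht : (c ^ S) ^ q = c ^ S := by
    rw [← pow_mul, mul_comm, aux_arith hq1 hm, pow_add, hcpow, mul_one]
  obtain ⟨k, hk⟩ := aux_fixed hK (c ^ S) ht
  -- 1 + q^m is even
  have heven : ∃ w, 1 + q ^ m = 2 * w := by
    have : Odd (q ^ m) := hqodd.pow
    obtain ⟨w, hw⟩ := this
    exact ⟨w + 1, by omega⟩
  obtain ⟨w, hw⟩ := heven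
  refine ⟨k ^ w, ?_⟩
  apply (algebraMap K F).injective
  rw [hnf, map_mul, map_pow, hk, ← pow_mul, ← pow_add, hsplit, hw]
  congr 1
  ring

lemma aux_rank_one {q n : ℕ} (hq : IsPrimePow q) (hK : Fintype.card K = q)
    (hF : Fintype.card F = q ^ n) (hn : 0 < n)
    (φ : F →ₗ[K] F) (hφ : Module.finrank K (LinearMap.range φ) = 1) :
    ∃ u v : F, u ≠ 0 ∧ v ≠ 0 ∧
      ∀ x : F, φ x = ∑ i ∈ range n, (u * v ^ q ^ i) * x ^ q ^ i := by
  obtain ⟨u₀, hu₀ne, hall⟩ := finrank_eq_one_iff'.mp hφ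
  set u : F := (u₀ : F) with hu_def
  have hu : u ≠ 0 := fun h => hu₀ne (by exact_mod_cast Subtype.ext h)
  have hex : ∀ x : F, ∃ c : K, c • u = φ x := by
    intro x
    obtain ⟨c, hc⟩ := hall ⟨φ x, LinearMap.mem_range_self φ x⟩
    exact ⟨c, by simpa using congrArg (Subtype.val) hc⟩
  choose ε hε using hex
  have hinj : ∀ c c' : K, c • u = c' • u → c = c' := by
    intro c c' h
    exact smul_left_injective K hu h
  have hadd : ∀ x y, ε (x + y) = ε x + ε y := by
    intro x y
    apply hinj
    rw [hε, map_add, ← hε, ← hε, add_smul]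
  have hsmul : ∀ (k : K) (x : F), ε (k • x) = k * ε x := by
    intro k x
    apply hinj
    rw [hε, map_smul, ← hε, mul_smul, smul_comm]  -- may need fixing
  set εₗ : F →ₗ[K] K :=
    { toFun := ε
      map_add' := hadd
      map_smul' := fun k x => by simpa using hsmul k x } with hεₗ
  have hφne : φ ≠ 0 := by
    intro h
    rw [h, LinearMap.range_zero] at hφ
    rw [finrank_bot] at hφ
    exact one_ne_zero hφ.symm
  obtain ⟨x₀, hx₀⟩ : ∃ x, φ x ≠ 0 := by
    by_contra h
    push_neg at h
    exact hφne (LinearMap.ext fun x => h x)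
  have hε0 : ε x₀ ≠ 0 := by
    intro h
    apply hx₀
    rw [← hε x₀, h, zero_smul]
  set B := Algebra.traceForm K F with hB
  have hnd := traceForm_nondegenerate K F
  set v : F := (B.toDual hnd).symm εₗ with hv_def
  have hvtr : ∀ x : F, Algebra.trace K F (v * x) = ε x := by
    intro x
    have h1 := (B.toDual hnd).apply_symm_apply εₗ
    have h2 : (B.toDual hnd) v x = ε x := by rw [← hv_def] at h1; rw [h1]; rfl
    rw [LinearMap.BilinForm.toDual_def] at h2
    rw [← h2, hB, Algebra.traceForm_apply]
  have hv : v ≠ 0 := by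
    intro h
    apply hε0
    rw [← hvtr x₀, h, zero_mul, map_zero]
  have htf := (aux_norm_trace (K := K) (F := F) hq hK hF hn).2
  refine ⟨u, v, hu, hv, fun x => ?_⟩
  have h1 : φ x = algebraMap K F (ε x) * u := by
    rw [← hε x, Algebra.smul_def]
  rw [h1, ← hvtr x, htf, Finset.sum_mul]
  refine Finset.sum_congr rfl fun i _ => ?_
  rw [mul_pow]
  ring

end Aux

/-- Let `q` be odd, `m ≥ 2`, `gcd(s,2m)=1`, and `η ∈ F_{q^{2m}}` with non-square norm
over `F_q`. Every nonzero element of the symmetric code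
`S = { a₀x + ∑_{j=1}^{m-2} aⱼ x^(q^(sj)) + ηb x^(q^(s(m-1))) + a x^(q^(sm))
      + η^(q^(s(m+1))) b^(q^s) x^(q^(s(m+1))) + ∑_{j=1}^{m-2} (aⱼx)^(q^(s(2m-j))) }`
(with `a, b ∈ F_{q^m}`) has rank at least `2` as an `F_q`-endomorphism of `F_{q^{2m}}`. -/
theorem stmt_17 (q m s : ℕ) (hq : IsPrimePow q) (hqodd : Odd q) (hm : 2 ≤ m)
    (hs : Nat.gcd s (2 * m) = 1)
    (K F : Type) [Field K] [Fintype K] [Field F] [Fintype F] [Algebra K F]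
    (hK : Fintype.card K = q) (hF : Fintype.card F = q ^ (2 * m))
    (η : F) (hη : ¬ IsSquare (Algebra.norm K η)) :
    ∀ φ : F →ₗ[K] F,
      (∃ a b : F, a ^ q ^ m = a ∧ b ^ q ^ m = b ∧ ∃ c : ℕ → F, ∀ x : F,
        φ x = c 0 * x + (∑ j ∈ Finset.Icc 1 (m - 2), c j * x ^ q ^ (s * j))
          + η * b * x ^ q ^ (s * (m - 1)) + a * x ^ q ^ (s * m)
          + η ^ q ^ (s * (m + 1)) * b ^ q ^ s * x ^ q ^ (s * (m + 1))
          + ∑ j ∈ Finset.Icc 1 (m - 2), (c j * x) ^ q ^ (s * (2 * m - j))) →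
      φ ≠ 0 → 2 ≤ Module.finrank K (LinearMap.range φ) := by
  intro φ hex hφ0
  obtain ⟨a, b, ha, hb, c, hrep⟩ := hex
  have hq1 : 1 < q := hq.one_lt
  have hn : 0 < 2 * m := by omega
  by_contra hlt
  push_neg at hlt
  have hr1 : Module.finrank K (LinearMap.range φ) = 1 := by
    have h0 : LinearMap.range φ ≠ ⊥ := by rwa [ne_eq, LinearMap.range_eq_bot]
    have hne : Module.finrank K (LinearMap.range φ) ≠ 0 := by
      intro h
      exact h0 (Submodule.finrank_eq_zero.mp h)
    omega
  obtain ⟨u, v, hu, hv, hrep2⟩ := aux_rank_one hq hK hF hn φ hr1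
  classical
  -- the coefficient function of the q-polynomial representation of φ
  set A : ℕ → F := fun j =>
    if j = 0 then c 0
    else if j ≤ m - 2 then c j
    else if j = m - 1 then η * b
    else if j = m then a
    else if j = m + 1 then η ^ q ^ (s * (m + 1)) * b ^ q ^ s
    else c (2 * m - j) ^ q ^ (s * j) with hA_def
  have hA0 : A 0 = c 0 := by simp [hA_def]
  have hAj : ∀ j, 1 ≤ j → j ≤ m - 2 → A j = c j := by
    intro j h1 h2
    simp only [hA_def]
    rw [if_neg (by omega), if_pos h2]
  have hAm1 : A (m - 1) = η * b := by
    simp only [hA_def]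
    rw [if_neg (by omega), if_neg (by omega)]
    simp
  have hAm : A m = a := by
    simp only [hA_def]
    rw [if_neg (by omega), if_neg (by omega), if_neg (by omega)]
    simp [show m ≠ m + 1 from by omega]
  have hAm2 : A (m + 1) = η ^ q ^ (s * (m + 1)) * b ^ q ^ s := by
    simp only [hA_def]
    rw [if_neg (by omega), if_neg (by omega), if_neg (by omega), if_neg (by omega)]
    simp
  have hAhigh : ∀ j, 1 ≤ j → j ≤ m - 2 →
      A (2 * m - j) = c j ^ q ^ (s * (2 * m - j)) := by
    intro j h1 h2
    simp only [hA_def]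
    rw [if_neg (by omega), if_neg (by omega), if_neg (by omega), if_neg (by omega),
      if_neg (by omega)]
    congr 2
    omega
  -- representation of φ with coefficients A
  have hrepA : ∀ x : F, φ x = ∑ j ∈ range (2 * m), A j * x ^ q ^ (s * j) := by
    intro x
    set g : ℕ → F := fun j => A j * x ^ q ^ (s * j) with hg_def
    have e1 : ∑ j ∈ range (2 * m), g j =
        ∑ j ∈ Ico 0 1, g j + (∑ j ∈ Ico 1 (m - 1), g j + (∑ j ∈ Ico (m - 1) m, g j +
          (∑ j ∈ Ico m (m + 1), g j + (∑ j ∈ Ico (m + 1) (m + 2), g j +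
            ∑ j ∈ Ico (m + 2) (2 * m), g j)))) := by
      rw [Finset.range_eq_Ico,
        ← Finset.sum_Ico_consecutive g (by omega : (0:ℕ) ≤ 1) (by omega : 1 ≤ 2 * m)]
      congr 1
      rw [← Finset.sum_Ico_consecutive g (by omega : 1 ≤ m - 1) (by omega : m - 1 ≤ 2 * m)]
      congr 1
      rw [← Finset.sum_Ico_consecutive g (by omega : m - 1 ≤ m) (by omega : m ≤ 2 * m)]
      congr 1
      rw [← Finset.sum_Ico_consecutive g (by omega : m ≤ m + 1) (by omega : m + 1 ≤ 2 * m)]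
      congr 1
      rw [← Finset.sum_Ico_consecutive g (by omega : m + 1 ≤ m + 2) (by omega : m + 2 ≤ 2 * m)]
    have sing : ∀ a₀ : ℕ, ∑ j ∈ Ico a₀ (a₀ + 1), g j = g a₀ := by
      intro a₀
      rw [Finset.sum_Ico_succ_top (le_refl _), Finset.Ico_self, Finset.sum_empty, zero_add]
    have P0 : ∑ j ∈ Ico 0 1, g j = c 0 * x := by
      rw [show Ico 0 1 = Ico 0 (0 + 1) from rfl, sing 0]
      simp only [hg_def, hA0, Nat.mul_zero, pow_zero, pow_one]
    have P1 : ∑ j ∈ Ico 1 (m - 1), g j = ∑ j ∈ Finset.Icc 1 (m - 2), c j * x ^ q ^ (s * j) := by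
      rw [show m - 1 = (m - 2) + 1 from by omega, Finset.Ico_add_one_right_eq_Icc]
      refine Finset.sum_congr rfl fun j hj => ?_
      rw [Finset.mem_Icc] at hj
      simp only [hg_def]
      rw [hAj j hj.1 hj.2]
    have P2 : ∑ j ∈ Ico (m - 1) m, g j = η * b * x ^ q ^ (s * (m - 1)) := by
      have hIc : Ico (m - 1) m = Ico (m - 1) ((m - 1) + 1) := by congr 1; omega
      rw [hIc, sing]
      simp only [hg_def, hAm1]
    have P3 : ∑ j ∈ Ico m (m + 1), g j = a * x ^ q ^ (s * m) := by
      rw [sing]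
      simp only [hg_def, hAm]
    have P4 : ∑ j ∈ Ico (m + 1) (m + 2), g j
        = η ^ q ^ (s * (m + 1)) * b ^ q ^ s * x ^ q ^ (s * (m + 1)) := by
      rw [show Ico (m + 1) (m + 2) = Ico (m + 1) ((m + 1) + 1) from rfl, sing]
      simp only [hg_def, hAm2]
    have P5 : ∑ j ∈ Ico (m + 2) (2 * m), g j
        = ∑ j ∈ Finset.Icc 1 (m - 2), (c j * x) ^ q ^ (s * (2 * m - j)) := by
      refine (Finset.sum_nbij' (fun j => 2 * m - j) (fun j => 2 * m - j)
        ?_ ?_ ?_ ?_ ?_).symm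
      · intro j hj
        rw [Finset.mem_Icc] at hj
        rw [Finset.mem_Ico]
        omega
      · intro j hj
        rw [Finset.mem_Ico] at hj
        rw [Finset.mem_Icc]
        omega
      · intro j hj
        rw [Finset.mem_Icc] at hj
        omega
      · intro j hj
        rw [Finset.mem_Ico] at hj
        omega
      · intro j hj
        rw [Finset.mem_Icc] at hj
        simp only [hg_def]
        rw [hAhigh j hj.1 hj.2, mul_pow]
    rw [hrep x]
    show _ = ∑ j ∈ range (2 * m), g j
    rw [e1, P0, P1, P2, P3, P4, P5]
    ring
  -- reduce exponents modulo 2m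
  set σn : ℕ → ℕ := fun j => (s * j) % (2 * m) with hσ_def
  have hσlt : ∀ j, σn j < 2 * m := fun j => Nat.mod_lt _ hn
  have hinjOn : Set.InjOn σn (range (2 * m)) := by
    intro j hj j' hj' hjj'
    rw [Finset.coe_range, Set.mem_Iio] at hj hj'
    have hmod : s * j ≡ s * j' [MOD 2 * m] := hjj'
    have := Nat.ModEq.cancel_left_of_coprime (by rwa [Nat.gcd_comm]) hmod
    have h2 := this
    unfold Nat.ModEq at h2
    rw [Nat.mod_eq_of_lt hj, Nat.mod_eq_of_lt hj'] at h2
    exact h2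
  have himg : (range (2 * m)).image σn = range (2 * m) := by
    apply Finset.eq_of_subset_of_card_le
    · intro i hi
      rw [Finset.mem_image] at hi
      obtain ⟨j, -, rfl⟩ := hi
      exact Finset.mem_range.mpr (hσlt j)
    · rw [Finset.card_image_of_injOn hinjOn]
  have hrepA' : ∀ x : F, φ x = ∑ j ∈ range (2 * m), A j * x ^ q ^ σn j := by
    intro x
    rw [hrepA x]
    exact Finset.sum_congr rfl fun j _ => by rw [aux_pow_reduce hF x (s * j)]
  have heq : ∀ x : F, ∑ j ∈ range (2 * m), A j * x ^ q ^ σn j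
      = ∑ j ∈ range (2 * m), (u * v ^ q ^ σn j) * x ^ q ^ σn j := by
    intro x
    rw [← hrepA' x, hrep2 x]
    have h2 : ∑ j ∈ range (2 * m), (u * v ^ q ^ σn j) * x ^ q ^ σn j
        = ∑ i ∈ (range (2 * m)).image σn, (u * v ^ q ^ i) * x ^ q ^ i := by
      rw [Finset.sum_image (fun a ha b hb hab =>
        hinjOn (Finset.mem_coe.mpr ha) (Finset.mem_coe.mpr hb) hab)]
    rw [h2, himg]
  have hcoef : ∀ j ∈ range (2 * m), A j = u * v ^ q ^ σn j :=
    aux_dedekind hF hq1 (range (2 * m)) σn (fun j _ => hσlt j) hinjOn A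
      (fun j => u * v ^ q ^ σn j) heq
  have h1 : η * b = u * v ^ q ^ σn (m - 1) := by
    rw [← hAm1]
    exact hcoef (m - 1) (Finset.mem_range.mpr (by omega))
  have h2 : a = u * v ^ q ^ σn m := by
    rw [← hAm]
    exact hcoef m (Finset.mem_range.mpr (by omega))
  have hb0 : b ≠ 0 := by
    intro h
    rw [h, mul_zero] at h1
    exact (mul_ne_zero hu (pow_ne_zero _ hv)) h1.symm
  have ha0 : a ≠ 0 := by
    intro h
    rw [h] at h2
    exact (mul_ne_zero hu (pow_ne_zero _ hv)) h2.symm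
  -- norms
  have e1 : Algebra.norm K η * Algebra.norm K b = Algebra.norm K u * Algebra.norm K v := by
    have := congrArg (Algebra.norm K) h1
    rwa [map_mul, map_mul, aux_norm_pow hq hK hF hn v] at this
  have e2 : Algebra.norm K a = Algebra.norm K u * Algebra.norm K v := by
    have := congrArg (Algebra.norm K) h2
    rwa [map_mul, aux_norm_pow hq hK hF hn v] at this
  have hNab : Algebra.norm K η * Algebra.norm K b = Algebra.norm K a := by
    rw [e1, e2]
  obtain ⟨r, hr⟩ := aux_norm_square hq hqodd hK hF (by omega) a ha ha0
  obtain ⟨t, ht⟩ := aux_norm_square hq hqodd hK hF (by omega) b hb hb0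
  have hNb0 : Algebra.norm K b ≠ 0 := Algebra.norm_ne_zero_iff.mpr hb0
  have ht0 : t ≠ 0 := by
    intro h
    rw [h, mul_zero] at ht
    exact hNb0 ht
  apply hη
  refine ⟨r * t⁻¹, ?_⟩
  have : Algebra.norm K η * (t * t) = r * r := by
    rw [← ht, ← hr, hNab]
  field_simp
  linear_combination this
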